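/- Let (Ω, P) be a probability space, B : Ω → Finset (Fin N) a random mini-batch with measurable inclusion events, g : Fin N → EuclideanSpace ℝ (Fin p), and k > 0. With Ĝ(ω) := (1/k) Σ_{i ∈ B ω} g i, λ i := P(i ∈ B), and ρ i j := P(i ∈ B ∧ j ∈ B), the variance of the estimator satisfies E[‖Ĝ‖²] − ‖E[Ĝ]‖² = (1/k²) Σ_{i ≠ j} (ρ i j − λ i · λ j) · (g i · g j) + (1/k²) Σ_{i : Fin N} λ i · (1 − λ i) · ‖g i‖². (Exact discrete analog of the variance formula of Theorem 1, decomposing the variance into a pairwise-correlation term and a diagonal term.) -/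

import Mathlib

open MeasureTheory
open scoped InnerProductSpace

/-- Exact discrete analog of the variance formula of Theorem 1: the variance of the
mini-batch gradient estimator decomposes into a pairwise-correlation term and a
diagonal term. -/
theorem discrete_variance_formula
    {Ω : Type*} [MeasurableSpace Ω] (P : Measure Ω) [IsProbabilityMeasure P]
    {N p : ℕ} (B : Ω → Finset (Fin N))
    (hB : ∀ i : Fin N, MeasurableSet {ω | i ∈ B ω})
    (hB2 : ∀ i j : Fin N, MeasurableSet {ω | i ∈ B ω ∧ j ∈ B ω})
    (g : Fin N → EuclideanSpace ℝ (Fin p)) (k : ℝ) (hk : 0 < k) :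
    (∫ ω, ‖(1 / k) • (∑ i ∈ B ω, g i)‖ ^ 2 ∂P)
      - ‖∫ ω, (1 / k) • (∑ i ∈ B ω, g i) ∂P‖ ^ 2
    = (1 / k ^ 2) * ∑ i : Fin N, ∑ j ∈ Finset.univ.erase i,
        ((P {ω | i ∈ B ω ∧ j ∈ B ω}).toReal
          - (P {ω | i ∈ B ω}).toReal * (P {ω | j ∈ B ω}).toReal) * ⟪g i, g j⟫_ℝ
      + (1 / k ^ 2) * ∑ i : Fin N,
          (P {ω | i ∈ B ω}).toReal * (1 - (P {ω | i ∈ B ω}).toReal) * ‖g i‖ ^ 2 := by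
  classical
  set lam : Fin N → ℝ := fun i => (P {ω | i ∈ B ω}).toReal with hlam
  set m : Fin N → Fin N → ℝ := fun i j => (P {ω | i ∈ B ω ∧ j ∈ B ω}).toReal with hm
  set χ : Fin N → Ω → ℝ := fun i ω => if i ∈ B ω then 1 else 0 with hχ
  have hχ_eq : ∀ i, χ i = Set.indicator {ω | i ∈ B ω} (fun _ => (1:ℝ)) := by
    intro i; funext ω; simp [χ, Set.indicator_apply, Set.mem_setOf_eq]
  have hχ_int : ∀ i, Integrable (χ i) P := by
    intro i
    rw [hχ_eq]
    exact (integrable_indicator_iff (hB i)).2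
      (integrableOn_const (measure_lt_top _ _).ne (by simp))
  have hχχ_eq : ∀ i j, (fun ω => χ i ω * χ j ω)
      = Set.indicator {ω | i ∈ B ω ∧ j ∈ B ω} (fun _ => (1:ℝ)) := by
    intro i j; funext ω
    by_cases h1 : i ∈ B ω <;> by_cases h2 : j ∈ B ω <;>
      simp [χ, Set.indicator_apply, Set.mem_setOf_eq, h1, h2]
  have hχχ_int : ∀ i j, Integrable (fun ω => χ i ω * χ j ω) P := by
    intro i j; rw [hχχ_eq]
    exact (integrable_indicator_iff (hB2 i j)).2
      (integrableOn_const (measure_lt_top _ _).ne (by simp))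
  have hint1 : ∀ i, ∫ ω, χ i ω ∂P = lam i := by
    intro i
    rw [show (fun ω => χ i ω) = Set.indicator {ω | i ∈ B ω} (fun _ => (1:ℝ)) from hχ_eq i,
      integral_indicator_const _ (hB i)]
    simp [lam, Measure.real]
  have hint2 : ∀ i j, ∫ ω, χ i ω * χ j ω ∂P = m i j := by
    intro i j
    rw [hχχ_eq i j, integral_indicator_const _ (hB2 i j)]
    simp [m, Measure.real]
  have hmii : ∀ i, m i i = lam i := by
    intro i; simp only [m, lam, and_self]
  have hsum : ∀ ω, (∑ i ∈ B ω, g i) = ∑ i : Fin N, χ i ω • g i := by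
    intro ω
    simp [χ, ite_smul, Finset.sum_ite_mem]
  have hnorm : ∀ (c : Fin N → ℝ), ‖∑ i : Fin N, c i • g i‖ ^ 2
      = ∑ i : Fin N, ∑ j : Fin N, (c i * c j) * ⟪g i, g j⟫_ℝ := by
    intro c
    rw [← real_inner_self_eq_norm_sq, sum_inner]
    refine Finset.sum_congr rfl fun i _ => ?_
    rw [inner_sum]
    refine Finset.sum_congr rfl fun j _ => ?_
    rw [real_inner_smul_left, real_inner_smul_right]
    ring
  -- first term
  have hL1 : (∫ ω, ‖(1 / k) • (∑ i ∈ B ω, g i)‖ ^ 2 ∂P)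
      = (1 / k ^ 2) * ∑ i : Fin N, ∑ j : Fin N, m i j * ⟪g i, g j⟫_ℝ := by
    have heq : ∀ ω, ‖(1 / k) • (∑ i ∈ B ω, g i)‖ ^ 2
        = (1 / k ^ 2) * ∑ i : Fin N, ∑ j : Fin N, (χ i ω * χ j ω) * ⟪g i, g j⟫_ℝ := by
      intro ω
      rw [norm_smul, mul_pow, hsum ω, hnorm]
      congr 1
      rw [Real.norm_eq_abs, abs_of_pos (by positivity : (0:ℝ) < 1 / k)]
      field_simp
    calc (∫ ω, ‖(1 / k) • (∑ i ∈ B ω, g i)‖ ^ 2 ∂P)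
        = ∫ ω, (1 / k ^ 2) * ∑ i : Fin N, ∑ j : Fin N, (χ i ω * χ j ω) * ⟪g i, g j⟫_ℝ ∂P := by
          exact integral_congr_ae (Filter.Eventually.of_forall heq)
      _ = (1 / k ^ 2) * ∫ ω, ∑ i : Fin N, ∑ j : Fin N, (χ i ω * χ j ω) * ⟪g i, g j⟫_ℝ ∂P := by
          rw [integral_const_mul]
      _ = (1 / k ^ 2) * ∑ i : Fin N, ∑ j : Fin N, m i j * ⟪g i, g j⟫_ℝ := by
          congr 1
          rw [integral_finset_sum _ (fun i _ => integrable_finset_sum _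
            (fun j _ => (hχχ_int i j).mul_const _))]
          refine Finset.sum_congr rfl fun i _ => ?_
          rw [integral_finset_sum _ (fun j _ => (hχχ_int i j).mul_const _)]
          refine Finset.sum_congr rfl fun j _ => ?_
          rw [integral_mul_const, hint2]
  -- second term
  have hL2 : ‖∫ ω, (1 / k) • (∑ i ∈ B ω, g i) ∂P‖ ^ 2
      = (1 / k ^ 2) * ∑ i : Fin N, ∑ j : Fin N, (lam i * lam j) * ⟪g i, g j⟫_ℝ := by
    have hInt : ∫ ω, (1 / k) • (∑ i ∈ B ω, g i) ∂P
        = (1 / k) • ∑ i : Fin N, lam i • g i := by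
      calc ∫ ω, (1 / k) • (∑ i ∈ B ω, g i) ∂P
          = ∫ ω, (1 / k) • (∑ i : Fin N, χ i ω • g i) ∂P := by
            exact integral_congr_ae (Filter.Eventually.of_forall fun ω => congrArg (fun v => (1 / k) • v) (hsum ω))
        _ = (1 / k) • ∫ ω, ∑ i : Fin N, χ i ω • g i ∂P := by rw [integral_smul]
        _ = (1 / k) • ∑ i : Fin N, lam i • g i := by
            congr 1
            rw [integral_finset_sum _ (fun i _ => (hχ_int i).smul_const (g i))]
            refine Finset.sum_congr rfl fun i _ => ?_
            rw [integral_smul_const, hint1]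
    rw [hInt, norm_smul, mul_pow, hnorm]
    congr 1
    rw [Real.norm_eq_abs, abs_of_pos (by positivity : (0:ℝ) < 1 / k)]
    field_simp
  rw [hL1, hL2, ← mul_sub, ← Finset.sum_sub_distrib]
  -- now pure algebra over sums
  rw [← mul_add, ← Finset.sum_add_distrib]
  congr 1
  refine Finset.sum_congr rfl fun i _ => ?_
  rw [← Finset.sum_sub_distrib]
  rw [← Finset.add_sum_erase (Finset.univ) (fun j => m i j * ⟪g i, g j⟫_ℝ - lam i * lam j * ⟪g i, g j⟫_ℝ) (Finset.mem_univ i)]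
  rw [add_comm]
  congr 1
  · refine Finset.sum_congr rfl fun j _ => ?_
    ring
  · rw [hmii i, real_inner_self_eq_norm_sq]
    ring
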